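/- For α ∈ [1/2,1] and density matrices ρ, σ, the Petz–Hellinger divergence satisfies H̄_α(ρ‖σ) := (1/(1-α))(1 - Tr[ρ^α σ^{1-α}]) ≥ (1 - F(ρ,σ)^{2(1-α)})/(1-α) ≥ (1 - (1 - E₁(ρ‖σ)²)^{1-α})/(1-α). -/

import Mathlib

open Matrix BigOperators
open scoped ComplexOrder

open scoped Classical in
/-- `Tr[X₊]`: sum of the nonnegative eigenvalues of a Hermitian matrix (0 otherwise). -/
noncomputable def trPos {n : Type*} [Fintype n] [DecidableEq n] (X : Matrix n n ℂ) : ℝ :=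
  if h : X.IsHermitian then ∑ i, max (h.eigenvalues i) 0 else 0

/-- Hockey-stick divergence `E_γ(ρ‖σ) = Tr(ρ - γσ)₊`. -/
noncomputable def Egamma {n : Type*} [Fintype n] [DecidableEq n]
    (γ : ℝ) (ρ σ : Matrix n n ℂ) : ℝ :=
  trPos (ρ - (γ : ℂ) • σ)

/-- Trace norm `‖A‖₁ = Tr√(AᴴA)`: sum of singular values. -/
noncomputable def traceNorm {n : Type*} [Fintype n] [DecidableEq n] (A : Matrix n n ℂ) : ℝ :=
  ∑ i, Real.sqrt (((Matrix.posSemidef_conjTranspose_mul_self A).1).eigenvalues i)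

/-- Real power `ρ^α` of a Hermitian matrix via its spectral decomposition. -/
noncomputable def mpow {n : Type*} [Fintype n] [DecidableEq n]
    {ρ : Matrix n n ℂ} (hρ : ρ.IsHermitian) (α : ℝ) : Matrix n n ℂ :=
  (hρ.eigenvectorUnitary : Matrix n n ℂ) *
    Matrix.diagonal (fun i => ((hρ.eigenvalues i ^ α : ℝ) : ℂ)) *
    (star hρ.eigenvectorUnitary : Matrix n n ℂ)

/-- Fidelity `F(ρ,σ) = ‖√ρ√σ‖₁`. -/
noncomputable def fid {n : Type*} [Fintype n] [DecidableEq n]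
    {ρ σ : Matrix n n ℂ} (hρ : ρ.IsHermitian) (hσ : σ.IsHermitian) : ℝ :=
  traceNorm (mpow hρ (1/2) * mpow hσ (1/2))

/-- A density matrix: positive semidefinite with unit trace. -/
def IsDensity {n : Type*} [Fintype n] [DecidableEq n] (ρ : Matrix n n ℂ) : Prop :=
  ρ.PosSemidef ∧ ρ.trace = 1


open Finset
open scoped InnerProductSpace

lemma Matrix.IsHermitian.star_mul_self_mul_eq_diagonal {n : Type*} [Fintype n] [DecidableEq n]
    {A : Matrix n n ℂ} (hA : A.IsHermitian) :
    star (hA.eigenvectorUnitary : Matrix n n ℂ) * A * (hA.eigenvectorUnitary : Matrix n n ℂ) =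
      Matrix.diagonal (RCLike.ofReal ∘ hA.eigenvalues) := by
  have := hA.conjStarAlgAut_star_eigenvectorUnitary
  simpa [Unitary.conjStarAlgAut_apply] using this

section helpers
variable {n : Type*} [Fintype n] [DecidableEq n]
set_option linter.unusedSectionVars false
set_option maxHeartbeats 1000000

lemma hz_mul_star (z : ℂ) : z * star z = ((‖z‖ ^ 2 : ℝ) : ℂ) := by
  rw [show star z = starRingEnd ℂ z from rfl, Complex.mul_conj]
  norm_cast
  rw [← Complex.sq_norm]

/-- Cauchy–Schwarz for complex sums. -/
lemma abs_sum_mul_le {m : Type*} [Fintype m] (x y : m → ℂ) :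
    ‖∑ k, x k * y k‖ ≤ Real.sqrt (∑ k, ‖x k‖ ^ 2) * Real.sqrt (∑ k, ‖y k‖ ^ 2) := by
  let x' : EuclideanSpace ℂ m := WithLp.toLp 2 (fun k => starRingEnd ℂ (x k))
  let y' : EuclideanSpace ℂ m := WithLp.toLp 2 y
  have h1 : ⟪x', y'⟫_ℂ = ∑ k, x k * y k := by
    simp [x', y', PiLp.inner_apply, RCLike.inner_apply, mul_comm]
  have h2 : ‖x'‖ = Real.sqrt (∑ k, ‖x k‖ ^ 2) := by
    rw [EuclideanSpace.norm_eq]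
    congr 1
    exact Finset.sum_congr rfl fun k _ => by simp [x']
  have h3 : ‖y'‖ = Real.sqrt (∑ k, ‖y k‖ ^ 2) := by
    rw [EuclideanSpace.norm_eq]
  calc ‖∑ k, x k * y k‖ = ‖⟪x', y'⟫_ℂ‖ := by rw [h1]
    _ ≤ ‖x'‖ * ‖y'‖ := norm_inner_le_norm x' y'
    _ = _ := by rw [h2, h3]

lemma row_normSq (X : Matrix n n ℂ) (i : n) :
    ((X * Xᴴ) i i).re = ∑ k, ‖X i k‖ ^ 2 := by
  rw [mul_apply, Complex.re_sum]
  refine Finset.sum_congr rfl fun k _ => ?_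
  rw [conjTranspose_apply, hz_mul_star, Complex.ofReal_re]

lemma col_normSq (X : Matrix n n ℂ) (i : n) :
    ((Xᴴ * X) i i).re = ∑ k, ‖X k i‖ ^ 2 := by
  rw [mul_apply, Complex.re_sum]
  refine Finset.sum_congr rfl fun k _ => ?_
  rw [conjTranspose_apply, mul_comm, hz_mul_star, Complex.ofReal_re]

lemma frob_trace (X : Matrix n n ℂ) :
    (Xᴴ * X).trace.re = ∑ p : n × n, ‖X p.1 p.2‖ ^ 2 := by
  rw [Matrix.trace, Complex.re_sum, Fintype.sum_prod_type_right]
  · exact Finset.sum_congr rfl fun i _ => by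
      rw [Matrix.diag_apply, col_normSq]

lemma traceNorm_nonneg (A : Matrix n n ℂ) : 0 ≤ traceNorm A :=
  Finset.sum_nonneg fun i _ => Real.sqrt_nonneg _

/-- Key upper bound: `Re Tr(M A) ≤ ‖A‖₁` for unitary `M`. -/
lemma re_trace_unitary_mul_le (A M : Matrix n n ℂ) (hM : M ∈ Matrix.unitaryGroup n ℂ) :
    (M * A).trace.re ≤ traceNorm A := by
  set h := (Matrix.posSemidef_conjTranspose_mul_self A).1 with hh
  set V : Matrix n n ℂ := (h.eigenvectorUnitary : Matrix n n ℂ) with hV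
  have hV1 : star V * V = 1 := Matrix.mem_unitaryGroup_iff'.mp h.eigenvectorUnitary.2
  have hV2 : V * star V = 1 := Matrix.mem_unitaryGroup_iff.mp h.eigenvectorUnitary.2
  have hM1 : M * star M = 1 := Matrix.mem_unitaryGroup_iff.mp hM
  have hdiag : star V * (Aᴴ * A) * V = Matrix.diagonal (RCLike.ofReal ∘ h.eigenvalues) :=
    Matrix.IsHermitian.star_mul_self_mul_eq_diagonal h
  have htr : (M * A).trace = ((star V * M) * (A * V)).trace := by
    have : (star V * M) * (A * V) = (star V * (M * A)) * V := by
      simp only [Matrix.mul_assoc]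
    rw [this, Matrix.trace_mul_comm (star V * (M * A)) V, ← Matrix.mul_assoc, hV2,
      Matrix.one_mul]
  have hrow : ∀ i, ∑ k, ‖(star V * M) i k‖ ^ 2 = 1 := by
    intro i
    rw [← row_normSq]
    have : (star V * M) * (star V * M)ᴴ = 1 := by
      rw [Matrix.conjTranspose_mul]
      rw [show star V * M * (Mᴴ * (star V)ᴴ) = star V * (M * star M) * V by
        simp only [Matrix.star_eq_conjTranspose, conjTranspose_conjTranspose, Matrix.mul_assoc]]
      rw [hM1, Matrix.mul_one, hV1]
    rw [this, Matrix.one_apply_eq, Complex.one_re]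
  have hcol : ∀ i, ∑ k, ‖(A * V) k i‖ ^ 2 = h.eigenvalues i := by
    intro i
    rw [← col_normSq]
    have : (A * V)ᴴ * (A * V) = Matrix.diagonal (RCLike.ofReal ∘ h.eigenvalues) := by
      rw [← hdiag]
      simp only [Matrix.conjTranspose_mul, Matrix.star_eq_conjTranspose, Matrix.mul_assoc]
    rw [this, Matrix.diagonal_apply_eq]
    rfl
  rw [htr, Matrix.trace, Complex.re_sum]
  have hbound : ∀ i, (((star V * M) * (A * V)).diag i).re ≤ Real.sqrt (h.eigenvalues i) := by
    intro i
    rw [Matrix.diag_apply, mul_apply]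
    calc (∑ k, (star V * M) i k * (A * V) k i).re
        ≤ ‖∑ k, (star V * M) i k * (A * V) k i‖ := Complex.re_le_norm _
      _ ≤ Real.sqrt (∑ k, ‖(star V * M) i k‖ ^ 2) *
            Real.sqrt (∑ k, ‖(A * V) k i‖ ^ 2) := abs_sum_mul_le _ _
      _ = Real.sqrt (h.eigenvalues i) := by
          rw [hrow, hcol, Real.sqrt_one, one_mul]
  exact Finset.sum_le_sum fun i _ => hbound i

lemma re_trace_le_traceNorm (A : Matrix n n ℂ) : A.trace.re ≤ traceNorm A := by
  have := re_trace_unitary_mul_le A 1 (Submonoid.one_mem _)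
  rwa [Matrix.one_mul] at this

/-- There is a unitary `M` attaining `Re Tr(M A) = ‖A‖₁`. -/
lemma exists_unitary_trace_eq (A : Matrix n n ℂ) :
    ∃ M ∈ Matrix.unitaryGroup n ℂ, (M * A).trace = (traceNorm A : ℂ) := by
  set h := (Matrix.posSemidef_conjTranspose_mul_self A).1 with hh
  set V : Matrix n n ℂ := (h.eigenvectorUnitary : Matrix n n ℂ) with hVdef
  have hV1 : star V * V = 1 := Matrix.mem_unitaryGroup_iff'.mp h.eigenvectorUnitary.2
  have hV2 : V * star V = 1 := Matrix.mem_unitaryGroup_iff.mp h.eigenvectorUnitary.2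
  set d : n → ℝ := h.eigenvalues with hd
  have hd0 : ∀ i, 0 ≤ d i := fun i =>
    (Matrix.posSemidef_conjTranspose_mul_self A).eigenvalues_nonneg i
  set C : Matrix n n ℂ := A * V with hC
  have hCC : Cᴴ * C = Matrix.diagonal (RCLike.ofReal ∘ d) := by
    rw [← Matrix.IsHermitian.star_mul_self_mul_eq_diagonal h]
    simp only [hC, Matrix.conjTranspose_mul, Matrix.star_eq_conjTranspose, Matrix.mul_assoc]
    rfl
  set c : n → EuclideanSpace ℂ n := fun i => WithLp.toLp 2 (fun k => C k i) with hc
  have hinner : ∀ i j, ⟪c i, c j⟫_ℂ = if i = j then (d i : ℂ) else 0 := by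
    intro i j
    have hij : ⟪c i, c j⟫_ℂ = (Cᴴ * C) i j := by
      rw [Matrix.mul_apply, PiLp.inner_apply]
      exact Finset.sum_congr rfl fun k _ => by
        simp [hc, Matrix.conjTranspose_apply, RCLike.inner_apply, mul_comm]
    rw [hij, hCC, Matrix.diagonal_apply]
    by_cases hij : i = j <;> simp [hij]
  set s : Set n := {i | d i ≠ 0} with hs
  set e : n → EuclideanSpace ℂ n := fun i => (((Real.sqrt (d i))⁻¹ : ℝ) : ℂ) • c i with he
  have hee : ∀ i, i ∈ s → ⟪e i, e i⟫_ℂ = 1 := by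
    intro i hi
    have hdi : 0 < d i := lt_of_le_of_ne (hd0 i) (Ne.symm hi)
    have hs2 : Real.sqrt (d i) * Real.sqrt (d i) = d i := Real.mul_self_sqrt (hd0 i)
    have hsne : Real.sqrt (d i) ≠ 0 := ne_of_gt (Real.sqrt_pos.mpr hdi)
    have h1 : ((Real.sqrt (d i))⁻¹ : ℝ) * ((Real.sqrt (d i))⁻¹ * d i) = 1 := by
      rw [← mul_assoc, ← mul_inv, hs2, inv_mul_cancel₀ (ne_of_gt hdi)]
    rw [he]
    simp only [inner_smul_left, inner_smul_right, Complex.conj_ofReal]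
    rw [hinner i i, if_pos rfl, ← Complex.ofReal_mul, ← Complex.ofReal_mul, h1,
      Complex.ofReal_one]
  have horth : Orthonormal ℂ (s.restrict e) := by
    rw [orthonormal_iff_ite]
    rintro ⟨i, hi⟩ ⟨j, hj⟩
    show ⟪e i, e j⟫_ℂ = _
    by_cases hij : i = j
    · subst hij
      rw [hee i hi, if_pos rfl]
    · rw [he]
      simp only [inner_smul_left, inner_smul_right, hinner i j, if_neg hij]
      simp [Subtype.mk.injEq, hij]
  have hcard : Module.finrank ℂ (EuclideanSpace ℂ n) = Fintype.card n := finrank_euclideanSpace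
  obtain ⟨b, hb⟩ := horth.exists_orthonormalBasis_extension_of_card_eq hcard
  set B : Matrix n n ℂ := fun k i => b i k with hB
  have hB1 : Bᴴ * B = 1 := by
    have hbo := b.orthonormal
    rw [orthonormal_iff_ite] at hbo
    ext i j
    rw [Matrix.mul_apply]
    have : ∑ k, (Bᴴ) i k * B k j = ⟪b i, b j⟫_ℂ := by
      rw [PiLp.inner_apply]
      exact Finset.sum_congr rfl fun k _ => by
        rw [Matrix.conjTranspose_apply]
        simp [hB, RCLike.inner_apply, mul_comm]
    rw [this, hbo i j, Matrix.one_apply]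
  refine ⟨V * Bᴴ, ?_, ?_⟩
  · rw [Matrix.mem_unitaryGroup_iff]
    have hstar : star (V * Bᴴ) = B * star V := by
      rw [Matrix.star_mul, Matrix.star_eq_conjTranspose (Bᴴ), conjTranspose_conjTranspose]
    rw [hstar, show V * Bᴴ * (B * star V) = V * (Bᴴ * B) * star V by
      simp only [Matrix.mul_assoc], hB1, Matrix.mul_one, hV2]
  · have htr : (V * Bᴴ * A).trace = (Bᴴ * C).trace := by
      rw [show V * Bᴴ * A = V * (Bᴴ * A) by simp only [Matrix.mul_assoc],
        Matrix.trace_mul_comm V (Bᴴ * A), Matrix.mul_assoc]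
    rw [htr, Matrix.trace]
    have hdiag : ∀ i, (Bᴴ * C).diag i = (Real.sqrt (d i) : ℂ) := by
      intro i
      have hbc : (Bᴴ * C).diag i = ⟪b i, c i⟫_ℂ := by
        rw [Matrix.diag_apply, Matrix.mul_apply, PiLp.inner_apply]
        exact Finset.sum_congr rfl fun k _ => by
          rw [Matrix.conjTranspose_apply]
          simp [hB, hc, RCLike.inner_apply, mul_comm]
      by_cases hi : i ∈ s
      · have hdi : 0 < d i := lt_of_le_of_ne (hd0 i) (Ne.symm hi)
        have hsne : (Real.sqrt (d i) : ℝ) ≠ 0 := ne_of_gt (Real.sqrt_pos.mpr hdi)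
        have hci : c i = ((Real.sqrt (d i) : ℝ) : ℂ) • e i := by
          rw [he, smul_smul, ← Complex.ofReal_mul, mul_inv_cancel₀ hsne]
          simp
        rw [hbc, hb i hi, hci, inner_smul_right, hee i hi, mul_one]
      · have hdi : d i = 0 := by
          by_contra hne
          exact hi hne
        have hci : c i = 0 := by
          have := hinner i i
          rw [if_pos rfl, hdi, Complex.ofReal_zero] at this
          exact inner_self_eq_zero.mp this
        rw [hbc, hci, inner_zero_right, hdi, Real.sqrt_zero, Complex.ofReal_zero]
    calc ∑ i, (Bᴴ * C).diag i = ∑ i, ((Real.sqrt (d i) : ℝ) : ℂ) :=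
          Finset.sum_congr rfl fun i _ => hdiag i
      _ = ((∑ i, Real.sqrt (d i) : ℝ) : ℂ) := by push_cast; ring
      _ = (traceNorm A : ℂ) := rfl

lemma traceNorm_add_le (A B : Matrix n n ℂ) :
    traceNorm (A + B) ≤ traceNorm A + traceNorm B := by
  obtain ⟨M, hM, htr⟩ := exists_unitary_trace_eq (A + B)
  have h1 : traceNorm (A + B) = (M * (A + B)).trace.re := by
    rw [htr, Complex.ofReal_re]
  rw [h1, Matrix.mul_add, Matrix.trace_add, Complex.add_re]
  exact add_le_add (re_trace_unitary_mul_le A M hM) (re_trace_unitary_mul_le B M hM)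

lemma traceNorm_mul_le (X Y : Matrix n n ℂ) :
    traceNorm (X * Y) ≤ Real.sqrt ((Xᴴ * X).trace.re) * Real.sqrt ((Yᴴ * Y).trace.re) := by
  obtain ⟨M, hM, htr⟩ := exists_unitary_trace_eq (X * Y)
  have hM1 : star M * M = 1 := Matrix.mem_unitaryGroup_iff'.mp hM
  have h1 : traceNorm (X * Y) = ((M * X) * Y).trace.re := by
    rw [Matrix.mul_assoc, htr, Complex.ofReal_re]
  have h2 : ((M * X) * Y).trace = ∑ p : n × n, (M * X) p.1 p.2 * Y p.2 p.1 := by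
    rw [Matrix.trace, Fintype.sum_prod_type]
    refine Finset.sum_congr rfl fun i _ => ?_
    rw [Matrix.diag_apply, Matrix.mul_apply]
  have h3 : ((M * X) * Y).trace.re ≤
      Real.sqrt (∑ p : n × n, ‖(M * X) p.1 p.2‖ ^ 2) *
        Real.sqrt (∑ p : n × n, ‖Y p.2 p.1‖ ^ 2) := by
    rw [h2]
    calc (∑ p : n × n, (M * X) p.1 p.2 * Y p.2 p.1).re
        ≤ ‖∑ p : n × n, (M * X) p.1 p.2 * Y p.2 p.1‖ := Complex.re_le_norm _
      _ ≤ _ := abs_sum_mul_le _ _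
  have h4 : ∑ p : n × n, ‖(M * X) p.1 p.2‖ ^ 2 = (Xᴴ * X).trace.re := by
    have hcong : (M * X)ᴴ * (M * X) = Xᴴ * X := by
      rw [Matrix.conjTranspose_mul]
      rw [show Xᴴ * Mᴴ * (M * X) = Xᴴ * (star M * M) * X by
        simp only [Matrix.star_eq_conjTranspose, Matrix.mul_assoc]]
      rw [hM1, Matrix.mul_one]
    rw [← hcong]
    exact (frob_trace _).symm
  have h5 : ∑ p : n × n, ‖Y p.2 p.1‖ ^ 2 = (Yᴴ * Y).trace.re := by
    rw [frob_trace]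
    exact Fintype.sum_equiv (Equiv.prodComm n n) _ _ fun p => rfl
  rw [h1]
  calc ((M * X) * Y).trace.re ≤ _ := h3
    _ = _ := by rw [h4, h5]

/-- `Tr[(U Df U*) (V Dg V*)] = ∑ᵢⱼ fᵢ gⱼ |(U*V)ᵢⱼ|²`. -/
lemma trace_conj_mul (U V : Matrix n n ℂ) (f g : n → ℝ) :
    ((U * diagonal (fun i => (f i : ℂ)) * star U) *
        (V * diagonal (fun j => (g j : ℂ)) * star V)).trace
      = ((∑ i, ∑ j, f i * g j * ‖(star U * V) i j‖ ^ 2 : ℝ) : ℂ) := by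
  set W := star U * V with hW
  have h1 : (U * diagonal (fun i => (f i : ℂ)) * star U) *
      (V * diagonal (fun j => (g j : ℂ)) * star V)
      = U * (diagonal (fun i => (f i : ℂ)) * W * diagonal (fun j => (g j : ℂ)) * star V) := by
    simp only [hW, Matrix.star_eq_conjTranspose, Matrix.mul_assoc]
  rw [h1, Matrix.trace_mul_comm]
  have h2 : (diagonal (fun i => (f i : ℂ)) * W * diagonal (fun j => (g j : ℂ)) * star V) * U
      = diagonal (fun i => (f i : ℂ)) * W * diagonal (fun j => (g j : ℂ)) * star W := by
    simp only [hW, Matrix.star_eq_conjTranspose, Matrix.conjTranspose_mul,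
      conjTranspose_conjTranspose, Matrix.mul_assoc]
  rw [h2, Matrix.trace]
  have hdiag : ∀ i,
      (diagonal (fun i => (f i : ℂ)) * W * diagonal (fun j => (g j : ℂ)) * star W).diag i
      = ((∑ j, f i * g j * ‖W i j‖ ^ 2 : ℝ) : ℂ) := by
    intro i
    rw [Matrix.diag_apply, Matrix.mul_apply]
    push_cast
    refine Finset.sum_congr rfl fun j _ => ?_
    rw [Matrix.mul_diagonal, Matrix.diagonal_mul, Matrix.star_eq_conjTranspose,
      Matrix.conjTranspose_apply]
    rw [show (f i : ℂ) * W i j * (g j : ℂ) * star (W i j)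
        = (f i : ℂ) * (g j : ℂ) * (W i j * star (W i j)) by ring, hz_mul_star]
    push_cast
    ring
  rw [Finset.sum_congr rfl fun i _ => hdiag i]
  push_cast
  ring

lemma sum_normSq_row_unitary {U V : Matrix n n ℂ} (hU : U ∈ Matrix.unitaryGroup n ℂ)
    (hV : V ∈ Matrix.unitaryGroup n ℂ) (i : n) :
    ∑ j, ‖(star U * V) i j‖ ^ 2 = 1 := by
  rw [← row_normSq]
  have h1 : (star U * V) * (star U * V)ᴴ = 1 := by
    have : (star U * V) * (star U * V)ᴴ = star U * (V * star V) * U := by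
      simp only [Matrix.star_eq_conjTranspose, Matrix.conjTranspose_mul,
        conjTranspose_conjTranspose, Matrix.mul_assoc]
    rw [this, Matrix.mem_unitaryGroup_iff.mp hV, Matrix.mul_one,
      Matrix.mem_unitaryGroup_iff'.mp hU]
  rw [h1, Matrix.one_apply_eq, Complex.one_re]

lemma sum_normSq_col_unitary {U V : Matrix n n ℂ} (hU : U ∈ Matrix.unitaryGroup n ℂ)
    (hV : V ∈ Matrix.unitaryGroup n ℂ) (j : n) :
    ∑ i, ‖(star U * V) i j‖ ^ 2 = 1 := by
  rw [← col_normSq]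
  have h1 : (star U * V)ᴴ * (star U * V) = 1 := by
    have : (star U * V)ᴴ * (star U * V) = star V * (U * star U) * V := by
      simp only [Matrix.star_eq_conjTranspose, Matrix.conjTranspose_mul,
        conjTranspose_conjTranspose, Matrix.mul_assoc]
    rw [this, Matrix.mem_unitaryGroup_iff.mp hU, Matrix.mul_one,
      Matrix.mem_unitaryGroup_iff'.mp hV]
  rw [h1, Matrix.one_apply_eq, Complex.one_re]

/-- finite weighted Hölder / interpolation. -/
lemma sum_holder {ι : Type*} [Fintype ι] (c x y : ι → ℝ) (hc : ∀ i, 0 ≤ c i)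
    (hx : ∀ i, 0 ≤ x i) (hy : ∀ i, 0 ≤ y i) (t : ℝ) (h0 : 0 ≤ t) (h1 : t ≤ 1) :
    ∑ i, c i * (x i ^ t * y i ^ (1 - t)) ≤ (∑ i, c i * x i) ^ t * (∑ i, c i * y i) ^ (1 - t) := by
  rcases eq_or_lt_of_le h0 with ht0 | ht0
  · simp [← ht0, Real.rpow_one]
  rcases eq_or_lt_of_le h1 with ht1 | ht1
  · simp [ht1, Real.rpow_one]
  have h1t : 0 < 1 - t := by linarith
  set S := ∑ i, c i * x i with hS
  set T := ∑ i, c i * y i with hT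
  have hS0 : 0 ≤ S := Finset.sum_nonneg fun i _ => mul_nonneg (hc i) (hx i)
  have hT0 : 0 ≤ T := Finset.sum_nonneg fun i _ => mul_nonneg (hc i) (hy i)
  rcases eq_or_lt_of_le hS0 with hS0' | hSpos
  · have hz : ∀ i ∈ Finset.univ, c i * (x i ^ t * y i ^ (1 - t)) = 0 := by
      intro i _
      have hcx : c i * x i = 0 := by
        have := Finset.sum_eq_zero_iff_of_nonneg
          (fun i _ => mul_nonneg (hc i) (hx i)) |>.mp hS0'.symm
        exact this i (Finset.mem_univ i)
      rcases mul_eq_zero.mp hcx with hc0 | hx0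
      · rw [hc0, zero_mul]
      · rw [hx0, Real.zero_rpow (ne_of_gt ht0), zero_mul, mul_zero]
    rw [Finset.sum_eq_zero hz]
    exact mul_nonneg (Real.rpow_nonneg hS0 t) (Real.rpow_nonneg hT0 (1 - t))
  rcases eq_or_lt_of_le hT0 with hT0' | hTpos
  · have hz : ∀ i ∈ Finset.univ, c i * (x i ^ t * y i ^ (1 - t)) = 0 := by
      intro i _
      have hcy : c i * y i = 0 := by
        have := Finset.sum_eq_zero_iff_of_nonneg
          (fun i _ => mul_nonneg (hc i) (hy i)) |>.mp hT0'.symm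
        exact this i (Finset.mem_univ i)
      rcases mul_eq_zero.mp hcy with hc0 | hy0
      · rw [hc0, zero_mul]
      · rw [hy0, Real.zero_rpow (ne_of_gt h1t), mul_zero, mul_zero]
    rw [Finset.sum_eq_zero hz]
    exact mul_nonneg (Real.rpow_nonneg hS0 t) (Real.rpow_nonneg hT0 (1 - t))
  have key : ∀ i, c i * (x i ^ t * y i ^ (1 - t)) ≤
      S ^ t * T ^ (1 - t) * (c i * (t * (x i / S) + (1 - t) * (y i / T))) := by
    intro i
    have hgm : (x i / S) ^ t * (y i / T) ^ (1 - t) ≤ t * (x i / S) + (1 - t) * (y i / T) :=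
      Real.geom_mean_le_arith_mean2_weighted (le_of_lt ht0) (le_of_lt h1t)
        (div_nonneg (hx i) hS0) (div_nonneg (hy i) hT0) (by ring)
    have hrw : x i ^ t * y i ^ (1 - t) =
        S ^ t * T ^ (1 - t) * ((x i / S) ^ t * (y i / T) ^ (1 - t)) := by
      rw [Real.div_rpow (hx i) hS0, Real.div_rpow (hy i) hT0]
      field_simp [ne_of_gt (Real.rpow_pos_of_pos hSpos t),
        ne_of_gt (Real.rpow_pos_of_pos hTpos (1 - t))]
      try ring
    calc c i * (x i ^ t * y i ^ (1 - t))
        = S ^ t * T ^ (1 - t) * (c i * ((x i / S) ^ t * (y i / T) ^ (1 - t))) := by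
          rw [hrw]; ring
      _ ≤ S ^ t * T ^ (1 - t) * (c i * (t * (x i / S) + (1 - t) * (y i / T))) := by
          apply mul_le_mul_of_nonneg_left _ (by positivity)
          exact mul_le_mul_of_nonneg_left hgm (hc i)
  calc ∑ i, c i * (x i ^ t * y i ^ (1 - t))
      ≤ ∑ i, S ^ t * T ^ (1 - t) * (c i * (t * (x i / S) + (1 - t) * (y i / T))) :=
        Finset.sum_le_sum fun i _ => key i
    _ = S ^ t * T ^ (1 - t) * (t / S * S + (1 - t) / T * T) := by
        rw [← Finset.mul_sum]
        congr 1
        rw [hS, hT, Finset.mul_sum, Finset.mul_sum, ← Finset.sum_add_distrib]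
        refine Finset.sum_congr rfl fun i _ => ?_
        field_simp
    _ = S ^ t * T ^ (1 - t) := by
        field_simp
        ring

lemma rpow_interp {a b α : ℝ} (ha : 0 ≤ a) (hb : 0 ≤ b) (hα1 : 1/2 ≤ α) :
    (a ^ (1/2 : ℝ) * b ^ (1/2 : ℝ)) ^ (2*(1-α)) * a ^ (1 - 2*(1-α)) = a ^ α * b ^ (1 - α) := by
  have hne : (1-α) + (2*α-1) ≠ 0 := by
    intro h
    have h0 : α = 0 := by linarith
    rw [h0] at hα1
    norm_num at hα1
  calc (a ^ (1/2 : ℝ) * b ^ (1/2 : ℝ)) ^ (2*(1-α)) * a ^ (1 - 2*(1-α))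
      = (a ^ ((1/2 : ℝ)*(2*(1-α))) * b ^ ((1/2 : ℝ)*(2*(1-α)))) * a ^ (1 - 2*(1-α)) := by
        rw [Real.mul_rpow (Real.rpow_nonneg ha _) (Real.rpow_nonneg hb _),
          ← Real.rpow_mul ha, ← Real.rpow_mul hb]
    _ = a ^ (1-α) * b ^ (1-α) * a ^ (2*α - 1) := by
        rw [show (1/2 : ℝ)*(2*(1-α)) = 1-α by ring, show (1:ℝ) - 2*(1-α) = 2*α-1 by ring]
    _ = (a ^ ((1-α) + (2*α-1))) * b ^ (1-α) := by rw [Real.rpow_add' ha hne]; ring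
    _ = a ^ α * b ^ (1-α) := by rw [show (1-α) + (2*α-1) = α by ring]

lemma mpow_eq {ρ : Matrix n n ℂ} (hρ : ρ.IsHermitian) (α : ℝ) :
    mpow hρ α = (hρ.eigenvectorUnitary : Matrix n n ℂ) *
      Matrix.diagonal (fun i => ((hρ.eigenvalues i ^ α : ℝ) : ℂ)) *
      star (hρ.eigenvectorUnitary : Matrix n n ℂ) := by
  rfl

lemma spectral_ofReal {ρ : Matrix n n ℂ} (hρ : ρ.IsHermitian) :
    ρ = (hρ.eigenvectorUnitary : Matrix n n ℂ) *
      Matrix.diagonal (fun i => ((hρ.eigenvalues i : ℝ) : ℂ)) *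
      star (hρ.eigenvectorUnitary : Matrix n n ℂ) :=
  hρ.spectral_theorem

/-- `(U Df U*)ᴴ = U Df U*` for real `f`. -/
lemma conj_diag_conjTranspose (U : Matrix n n ℂ) (f : n → ℝ) :
    (U * Matrix.diagonal (fun i => ((f i : ℝ) : ℂ)) * star U)ᴴ
      = U * Matrix.diagonal (fun i => ((f i : ℝ) : ℂ)) * star U := by
  simp only [Matrix.conjTranspose_mul, Matrix.star_eq_conjTranspose,
    conjTranspose_conjTranspose, Matrix.diagonal_conjTranspose]
  have : star (fun i => ((f i : ℝ) : ℂ)) = fun i => ((f i : ℝ) : ℂ) := by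
    funext i
    simp [Complex.conj_ofReal]
  rw [this, Matrix.mul_assoc]

lemma conj_diag_mul {U : Matrix n n ℂ} (hU : star U * U = 1) (f g : n → ℝ) :
    (U * Matrix.diagonal (fun i => ((f i : ℝ) : ℂ)) * star U) *
      (U * Matrix.diagonal (fun i => ((g i : ℝ) : ℂ)) * star U)
      = U * Matrix.diagonal (fun i => ((f i * g i : ℝ) : ℂ)) * star U := by
  have h1 : (U * Matrix.diagonal (fun i => ((f i : ℝ) : ℂ)) * star U) *
      (U * Matrix.diagonal (fun i => ((g i : ℝ) : ℂ)) * star U)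
      = U * (Matrix.diagonal (fun i => ((f i : ℝ) : ℂ)) * (star U * U) *
          Matrix.diagonal (fun i => ((g i : ℝ) : ℂ))) * star U := by
    simp only [Matrix.mul_assoc]
  rw [h1, hU, Matrix.mul_one, Matrix.diagonal_mul_diagonal]
  congr 1
  congr 1
  funext i
  push_cast
  ring

lemma conj_diag_add {U : Matrix n n ℂ} (hU2 : U * star U = 1) (f g : n → ℝ)
    (hfg : ∀ i, f i + g i = 1) :
    (U * Matrix.diagonal (fun i => ((f i : ℝ) : ℂ)) * star U) +
      (U * Matrix.diagonal (fun i => ((g i : ℝ) : ℂ)) * star U) = 1 := by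
  have h1 : (U * Matrix.diagonal (fun i => ((f i : ℝ) : ℂ)) * star U) +
      (U * Matrix.diagonal (fun i => ((g i : ℝ) : ℂ)) * star U)
      = U * (Matrix.diagonal (fun i => ((f i : ℝ) : ℂ)) +
          Matrix.diagonal (fun i => ((g i : ℝ) : ℂ))) * star U := by
    rw [Matrix.mul_add, Matrix.add_mul]
  rw [h1, Matrix.diagonal_add]
  have : (fun i => ((f i : ℝ) : ℂ) + ((g i : ℝ) : ℂ)) = fun _ => (1 : ℂ) := by
    funext i
    rw [← Complex.ofReal_add, hfg i, Complex.ofReal_one]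
  rw [this, Matrix.diagonal_one, Matrix.mul_one, hU2]

lemma trace_conj_diag {U : Matrix n n ℂ} (hU : star U * U = 1) (f : n → ℝ) :
    (U * Matrix.diagonal (fun i => ((f i : ℝ) : ℂ)) * star U).trace
      = ((∑ i, f i : ℝ) : ℂ) := by
  rw [Matrix.trace_mul_comm, ← Matrix.mul_assoc, hU, Matrix.one_mul, Matrix.trace_diagonal]
  push_cast
  ring

lemma mpow_half_mul_self {ρ : Matrix n n ℂ} (hρ : ρ.PosSemidef) :
    mpow hρ.1 (1/2) * mpow hρ.1 (1/2) = ρ := by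
  rw [mpow_eq, conj_diag_mul (Matrix.mem_unitaryGroup_iff'.mp hρ.1.eigenvectorUnitary.2)]
  have : (fun i => ((hρ.1.eigenvalues i ^ (1/2 : ℝ) * hρ.1.eigenvalues i ^ (1/2 : ℝ) : ℝ) : ℂ))
      = fun i => ((hρ.1.eigenvalues i : ℝ) : ℂ) := by
    funext i
    congr 1
    rw [← Real.rpow_add' (hρ.eigenvalues_nonneg i) (by norm_num : (1/2 : ℝ) + 1/2 ≠ 0)]
    norm_num
  rw [this, ← spectral_ofReal]

/-- `0 ≤ Tr[(U Df U*)(V Dg V*)] ≤ 1` when `0 ≤ f ≤ 1`, `g ≥ 0`, `∑ g = 1`. -/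
lemma trace_proj_density_bounds {U V : Matrix n n ℂ} (hU : U ∈ Matrix.unitaryGroup n ℂ)
    (hV : V ∈ Matrix.unitaryGroup n ℂ) (f g : n → ℝ) (hf0 : ∀ i, 0 ≤ f i)
    (hf1 : ∀ i, f i ≤ 1) (hg0 : ∀ j, 0 ≤ g j) (hgs : ∑ j, g j = 1) :
    0 ≤ ((U * diagonal (fun i => (f i : ℂ)) * star U) *
        (V * diagonal (fun j => (g j : ℂ)) * star V)).trace.re ∧
      ((U * diagonal (fun i => (f i : ℂ)) * star U) *
        (V * diagonal (fun j => (g j : ℂ)) * star V)).trace.re ≤ 1 := by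
  rw [trace_conj_mul, Complex.ofReal_re]
  constructor
  · refine Finset.sum_nonneg fun i _ => Finset.sum_nonneg fun j _ => ?_
    exact mul_nonneg (mul_nonneg (hf0 i) (hg0 j)) (sq_nonneg _)
  · calc ∑ i, ∑ j, f i * g j * ‖(star U * V) i j‖ ^ 2
        ≤ ∑ i, ∑ j, g j * ‖(star U * V) i j‖ ^ 2 := by
          refine Finset.sum_le_sum fun i _ => Finset.sum_le_sum fun j _ => ?_
          calc f i * g j * ‖(star U * V) i j‖ ^ 2
              = f i * (g j * ‖(star U * V) i j‖ ^ 2) := by ring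
            _ ≤ 1 * (g j * ‖(star U * V) i j‖ ^ 2) :=
                mul_le_mul_of_nonneg_right (hf1 i) (mul_nonneg (hg0 j) (sq_nonneg _))
            _ = g j * ‖(star U * V) i j‖ ^ 2 := one_mul _
      _ = ∑ j, g j * ∑ i, ‖(star U * V) i j‖ ^ 2 := by
          rw [Finset.sum_comm]
          exact Finset.sum_congr rfl fun j _ => by rw [Finset.mul_sum]
      _ = ∑ j, g j := Finset.sum_congr rfl fun j _ => by
          rw [sum_normSq_col_unitary hU hV j, mul_one]
      _ = 1 := hgs

end helpers


section main
variable {n : Type*} [Fintype n] [DecidableEq n]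
set_option linter.unusedSectionVars false
set_option maxHeartbeats 2000000

lemma trace_mpow_mul {ρ σ : Matrix n n ℂ} (hρ : ρ.IsHermitian) (hσ : σ.IsHermitian) (β γ : ℝ) :
    (mpow hρ β * mpow hσ γ).trace
      = ((∑ i, ∑ j, hρ.eigenvalues i ^ β * hσ.eigenvalues j ^ γ *
          ‖(star (hρ.eigenvectorUnitary : Matrix n n ℂ) *
            (hσ.eigenvectorUnitary : Matrix n n ℂ)) i j‖ ^ 2 : ℝ) : ℂ) := by
  rw [mpow_eq, mpow_eq]
  exact trace_conj_mul _ _ _ _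

lemma trace_mpow_nonneg {ρ σ : Matrix n n ℂ} (hρP : ρ.PosSemidef) (hσP : σ.PosSemidef)
    (β γ : ℝ) : 0 ≤ (mpow hρP.1 β * mpow hσP.1 γ).trace.re := by
  rw [trace_mpow_mul, Complex.ofReal_re]
  refine Finset.sum_nonneg fun i _ => Finset.sum_nonneg fun j _ => ?_
  exact mul_nonneg (mul_nonneg (Real.rpow_nonneg (hρP.eigenvalues_nonneg i) _)
    (Real.rpow_nonneg (hσP.eigenvalues_nonneg j) _)) (sq_nonneg _)

lemma trace_mpow_interp {ρ σ : Matrix n n ℂ} (hρP : ρ.PosSemidef) (hσP : σ.PosSemidef)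
    (hρt : ρ.trace = 1) {α : ℝ} (hα1 : 1/2 ≤ α) (hα2 : α ≤ 1) :
    (mpow hρP.1 α * mpow hσP.1 (1-α)).trace.re
      ≤ ((mpow hρP.1 (1/2) * mpow hσP.1 (1/2)).trace.re) ^ (2*(1-α)) := by
  set U : Matrix n n ℂ := (hρP.1.eigenvectorUnitary : Matrix n n ℂ) with hU
  set V : Matrix n n ℂ := (hσP.1.eigenvectorUnitary : Matrix n n ℂ) with hV
  set p : n → ℝ := hρP.1.eigenvalues with hp
  set q : n → ℝ := hσP.1.eigenvalues with hq
  have hUmem : U ∈ Matrix.unitaryGroup n ℂ := hρP.1.eigenvectorUnitary.2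
  have hVmem : V ∈ Matrix.unitaryGroup n ℂ := hσP.1.eigenvectorUnitary.2
  have hU1 : star U * U = 1 := Matrix.mem_unitaryGroup_iff'.mp hUmem
  have hp0 : ∀ i, 0 ≤ p i := fun i => hρP.eigenvalues_nonneg i
  have hq0 : ∀ j, 0 ≤ q j := fun j => hσP.eigenvalues_nonneg j
  have hps : ∑ i, p i = 1 := by
    have h1 : ((∑ i, p i : ℝ) : ℂ) = 1 := by
      rw [← trace_conj_diag hU1 p, hU, hp, ← spectral_ofReal hρP.1]
      exact hρt
    exact_mod_cast h1
  have hform : ∀ β γ : ℝ, (mpow hρP.1 β * mpow hσP.1 γ).trace.re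
      = ∑ i, ∑ j, p i ^ β * q j ^ γ * ‖(star U * V) i j‖ ^ 2 := by
    intro β γ
    rw [hU, hV, hp, hq, trace_mpow_mul hρP.1 hσP.1, Complex.ofReal_re]
  have hrow : ∀ i, ∑ j, ‖(star U * V) i j‖ ^ 2 = 1 :=
    sum_normSq_row_unitary hUmem hVmem
  have key : ∑ ij : n × n, ‖(star U * V) ij.1 ij.2‖ ^ 2 *
        ((p ij.1 ^ (1/2 : ℝ) * q ij.2 ^ (1/2 : ℝ)) ^ (2*(1-α)) * (p ij.1) ^ (1 - 2*(1-α)))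
      ≤ (∑ ij : n × n, ‖(star U * V) ij.1 ij.2‖ ^ 2 *
            (p ij.1 ^ (1/2 : ℝ) * q ij.2 ^ (1/2 : ℝ))) ^ (2*(1-α)) *
          (∑ ij : n × n, ‖(star U * V) ij.1 ij.2‖ ^ 2 * p ij.1) ^ (1 - 2*(1-α)) :=
    sum_holder _ _ _ (fun ij => sq_nonneg _)
      (fun ij => mul_nonneg (Real.rpow_nonneg (hp0 _) _) (Real.rpow_nonneg (hq0 _) _))
      (fun ij => hp0 _) (2*(1-α)) (by linarith) (by linarith)
  have hcy : ∑ ij : n × n, ‖(star U * V) ij.1 ij.2‖ ^ 2 * p ij.1 = 1 := by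
    rw [Fintype.sum_prod_type]
    calc ∑ i, ∑ j, ‖(star U * V) i j‖ ^ 2 * p i
        = ∑ i, p i * ∑ j, ‖(star U * V) i j‖ ^ 2 := by
          refine Finset.sum_congr rfl fun i _ => ?_
          rw [Finset.mul_sum]
          exact Finset.sum_congr rfl fun j _ => mul_comm _ _
      _ = ∑ i, p i := Finset.sum_congr rfl fun i _ => by rw [hrow i, mul_one]
      _ = 1 := hps
  have hcx : ∑ ij : n × n, ‖(star U * V) ij.1 ij.2‖ ^ 2 *
        (p ij.1 ^ (1/2 : ℝ) * q ij.2 ^ (1/2 : ℝ))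
      = (mpow hρP.1 (1/2) * mpow hσP.1 (1/2)).trace.re := by
    rw [hform, Fintype.sum_prod_type]
    exact Finset.sum_congr rfl fun i _ => Finset.sum_congr rfl fun j _ => by ring
  have hlhs : ∑ ij : n × n, ‖(star U * V) ij.1 ij.2‖ ^ 2 *
        ((p ij.1 ^ (1/2 : ℝ) * q ij.2 ^ (1/2 : ℝ)) ^ (2*(1-α)) * (p ij.1) ^ (1 - 2*(1-α)))
      = (mpow hρP.1 α * mpow hσP.1 (1-α)).trace.re := by
    rw [hform, Fintype.sum_prod_type]
    refine Finset.sum_congr rfl fun i _ => Finset.sum_congr rfl fun j _ => ?_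
    rw [rpow_interp (hp0 i) (hq0 j) hα1]
    ring
  rw [hcy, Real.one_rpow, mul_one, hcx, hlhs] at key
  exact key

lemma trace_mpow_le_fid_rpow {ρ σ : Matrix n n ℂ} (hρP : ρ.PosSemidef) (hσP : σ.PosSemidef)
    (hρt : ρ.trace = 1) {α : ℝ} (hα1 : 1/2 ≤ α) (hα2 : α ≤ 1) :
    (mpow hρP.1 α * mpow hσP.1 (1-α)).trace.re ≤ (fid hρP.1 hσP.1) ^ (2*(1-α)) := by
  have hTh0 : 0 ≤ (mpow hρP.1 (1/2) * mpow hσP.1 (1/2)).trace.re :=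
    trace_mpow_nonneg hρP hσP _ _
  have hThF : (mpow hρP.1 (1/2) * mpow hσP.1 (1/2)).trace.re ≤ fid hρP.1 hσP.1 :=
    re_trace_le_traceNorm _
  calc (mpow hρP.1 α * mpow hσP.1 (1-α)).trace.re
      ≤ ((mpow hρP.1 (1/2) * mpow hσP.1 (1/2)).trace.re) ^ (2*(1-α)) :=
        trace_mpow_interp hρP hσP hρt hα1 hα2
    _ ≤ (fid hρP.1 hσP.1) ^ (2*(1-α)) := Real.rpow_le_rpow hTh0 hThF (by linarith)

/-- Fuchs–van de Graaf type bound: `F² ≤ 1 - E₁²`. -/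
lemma fvdg {ρ σ : Matrix n n ℂ} (hρP : ρ.PosSemidef) (hσP : σ.PosSemidef)
    (hρt : ρ.trace = 1) (hσt : σ.trace = 1) :
    (fid hρP.1 hσP.1) ^ 2 ≤ 1 - Egamma 1 ρ σ ^ 2 := by
  -- spectral data for ρ and σ
  set U : Matrix n n ℂ := (hρP.1.eigenvectorUnitary : Matrix n n ℂ) with hU
  set V : Matrix n n ℂ := (hσP.1.eigenvectorUnitary : Matrix n n ℂ) with hV
  set p : n → ℝ := hρP.1.eigenvalues with hp
  set q : n → ℝ := hσP.1.eigenvalues with hq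
  have hUmem : U ∈ Matrix.unitaryGroup n ℂ := hρP.1.eigenvectorUnitary.2
  have hVmem : V ∈ Matrix.unitaryGroup n ℂ := hσP.1.eigenvectorUnitary.2
  have hU1 : star U * U = 1 := Matrix.mem_unitaryGroup_iff'.mp hUmem
  have hV1 : star V * V = 1 := Matrix.mem_unitaryGroup_iff'.mp hVmem
  have hp0 : ∀ i, 0 ≤ p i := fun i => hρP.eigenvalues_nonneg i
  have hq0 : ∀ j, 0 ≤ q j := fun j => hσP.eigenvalues_nonneg j
  have hspecρ : ρ = U * diagonal (fun i => ((p i : ℝ) : ℂ)) * star U := by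
    rw [hU, hp]
    exact spectral_ofReal hρP.1
  have hspecσ : σ = V * diagonal (fun j => ((q j : ℝ) : ℂ)) * star V := by
    rw [hV, hq]
    exact spectral_ofReal hσP.1
  have hps : ∑ i, p i = 1 := by
    have h1 : ((∑ i, p i : ℝ) : ℂ) = 1 := by
      rw [← trace_conj_diag hU1 p, ← hspecρ]
      exact hρt
    exact_mod_cast h1
  have hqs : ∑ j, q j = 1 := by
    have h1 : ((∑ j, q j : ℝ) : ℂ) = 1 := by
      rw [← trace_conj_diag hV1 q, ← hspecσ]
      exact hσt
    exact_mod_cast h1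
  -- spectral data for the difference
  have hXh : (ρ - σ).IsHermitian := hρP.1.sub hσP.1
  set W : Matrix n n ℂ := (hXh.eigenvectorUnitary : Matrix n n ℂ) with hW
  set lam : n → ℝ := hXh.eigenvalues with hlam
  have hWmem : W ∈ Matrix.unitaryGroup n ℂ := hXh.eigenvectorUnitary.2
  have hW1 : star W * W = 1 := Matrix.mem_unitaryGroup_iff'.mp hWmem
  have hW2 : W * star W = 1 := Matrix.mem_unitaryGroup_iff.mp hWmem
  have hXspec : ρ - σ = W * diagonal (fun i => ((lam i : ℝ) : ℂ)) * star W := by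
    rw [hW, hlam]
    exact spectral_ofReal hXh
  set nd : n → ℝ := fun i => if 0 < lam i then 1 else 0 with hnd
  have hnd0 : ∀ i, 0 ≤ nd i := by
    intro i
    rw [hnd]
    dsimp only
    split_ifs <;> norm_num
  have hnd1 : ∀ i, nd i ≤ 1 := by
    intro i
    rw [hnd]
    dsimp only
    split_ifs <;> norm_num
  have hnd0' : ∀ i, 0 ≤ 1 - nd i := fun i => by linarith [hnd1 i]
  have hnd1' : ∀ i, 1 - nd i ≤ 1 := fun i => by linarith [hnd0 i]
  set P : Matrix n n ℂ := W * diagonal (fun i => ((nd i : ℝ) : ℂ)) * star W with hP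
  set P' : Matrix n n ℂ := W * diagonal (fun i => ((1 - nd i : ℝ) : ℂ)) * star W with hP'
  have hPid : P * P = P := by
    rw [hP, conj_diag_mul hW1]
    have h : (fun i => ((nd i * nd i : ℝ) : ℂ)) = (fun i => ((nd i : ℝ) : ℂ)) := by
      funext i
      congr 1
      rw [hnd]
      dsimp only
      split_ifs <;> norm_num
    rw [h]
  have hP'id : P' * P' = P' := by
    rw [hP', conj_diag_mul hW1]
    have h : (fun i => (((1 - nd i) * (1 - nd i) : ℝ) : ℂ))
        = (fun i => ((1 - nd i : ℝ) : ℂ)) := by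
      funext i
      congr 1
      rw [hnd]
      dsimp only
      split_ifs <;> norm_num
    rw [h]
  have hPH : Pᴴ = P := by
    rw [hP]
    exact conj_diag_conjTranspose _ _
  have hP'H : P'ᴴ = P' := by
    rw [hP']
    exact conj_diag_conjTranspose _ _
  have hPsum : P + P' = 1 := by
    rw [hP, hP']
    exact conj_diag_add hW2 _ _ (fun i => by ring)
  have hP'eq : P' = 1 - P := eq_sub_of_add_eq' hPsum
  -- value of `E`
  have hEval : Egamma 1 ρ σ = ∑ i, max (lam i) 0 := by
    unfold Egamma trPos
    rw [Complex.ofReal_one, one_smul, dif_pos hXh, hlam]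
  -- a, b and their bounds
  set a : ℝ := (P * ρ).trace.re with ha
  set b : ℝ := (P * σ).trace.re with hb
  have haB : 0 ≤ a ∧ a ≤ 1 := by
    have h := trace_proj_density_bounds hWmem hUmem nd p hnd0 hnd1 hp0 hps
    rw [← hspecρ, ← hP] at h
    exact h
  have hbB : 0 ≤ b ∧ b ≤ 1 := by
    have h := trace_proj_density_bounds hWmem hVmem nd q hnd0 hnd1 hq0 hqs
    rw [← hspecσ, ← hP] at h
    exact h
  have hsum1 : ∑ i, ∑ j, nd i * lam j * ‖(1 : Matrix n n ℂ) i j‖ ^ 2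
      = ∑ i, max (lam i) 0 := by
    refine Finset.sum_congr rfl fun i _ => ?_
    rw [Finset.sum_eq_single i]
    · rw [Matrix.one_apply_eq, norm_one, one_pow, mul_one]
      by_cases h : 0 < lam i
      · rw [hnd]
        dsimp only
        rw [if_pos h, one_mul, max_eq_left (le_of_lt h)]
      · rw [hnd]
        dsimp only
        rw [if_neg h, zero_mul, max_eq_right (not_lt.mp h)]
    · intro j _ hj
      rw [Matrix.one_apply_ne (Ne.symm hj)]
      simp
    · intro hmem
      exact absurd (Finset.mem_univ i) hmem
  have hEab : Egamma 1 ρ σ = a - b := by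
    have h1 : (P * (ρ - σ)).trace.re = ∑ i, max (lam i) 0 := by
      rw [hXspec, hP, trace_conj_mul W W nd lam, hW1, Complex.ofReal_re]
      exact hsum1
    have h2 : (P * (ρ - σ)).trace.re = a - b := by
      rw [Matrix.mul_sub, Matrix.trace_sub, Complex.sub_re, ha, hb]
    rw [hEval, ← h1, h2]
  have hP'ρ : (P' * ρ).trace.re = 1 - a := by
    rw [hP'eq, Matrix.sub_mul, Matrix.one_mul, Matrix.trace_sub, Complex.sub_re, hρt, ha,
      Complex.one_re]
  have hP'σ : (P' * σ).trace.re = 1 - b := by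
    rw [hP'eq, Matrix.sub_mul, Matrix.one_mul, Matrix.trace_sub, Complex.sub_re, hσt, hb,
      Complex.one_re]
  -- the fidelity splitting
  have hRR : mpow hρP.1 (1/2) * mpow hρP.1 (1/2) = ρ := mpow_half_mul_self hρP
  have hSS : mpow hσP.1 (1/2) * mpow hσP.1 (1/2) = σ := mpow_half_mul_self hσP
  have hRH : (mpow hρP.1 (1/2))ᴴ = mpow hρP.1 (1/2) := by
    rw [mpow_eq]
    exact conj_diag_conjTranspose _ _
  have hSH : (mpow hσP.1 (1/2))ᴴ = mpow hσP.1 (1/2) := by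
    rw [mpow_eq]
    exact conj_diag_conjTranspose _ _
  have hsplit : mpow hρP.1 (1/2) * mpow hσP.1 (1/2)
      = (mpow hρP.1 (1/2) * P) * (P * mpow hσP.1 (1/2))
        + (mpow hρP.1 (1/2) * P') * (P' * mpow hσP.1 (1/2)) := by
    have e1 : (mpow hρP.1 (1/2) * P) * (P * mpow hσP.1 (1/2))
        = mpow hρP.1 (1/2) * (P * mpow hσP.1 (1/2)) := by
      rw [show (mpow hρP.1 (1/2) * P) * (P * mpow hσP.1 (1/2))
          = mpow hρP.1 (1/2) * ((P * P) * mpow hσP.1 (1/2)) by simp only [Matrix.mul_assoc],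
        hPid]
    have e2 : (mpow hρP.1 (1/2) * P') * (P' * mpow hσP.1 (1/2))
        = mpow hρP.1 (1/2) * (P' * mpow hσP.1 (1/2)) := by
      rw [show (mpow hρP.1 (1/2) * P') * (P' * mpow hσP.1 (1/2))
          = mpow hρP.1 (1/2) * ((P' * P') * mpow hσP.1 (1/2)) by simp only [Matrix.mul_assoc],
        hP'id]
    rw [e1, e2, ← Matrix.mul_add, ← Matrix.add_mul, hPsum, Matrix.one_mul]
  have hb1 : traceNorm ((mpow hρP.1 (1/2) * P) * (P * mpow hσP.1 (1/2)))
      ≤ Real.sqrt a * Real.sqrt b := by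
    refine le_trans (traceNorm_mul_le _ _) ?_
    have hXX : ((mpow hρP.1 (1/2) * P)ᴴ * (mpow hρP.1 (1/2) * P)).trace.re = a := by
      rw [Matrix.conjTranspose_mul, hRH, hPH]
      have h' : (P * mpow hρP.1 (1/2)) * (mpow hρP.1 (1/2) * P) = P * (ρ * P) := by
        rw [show (P * mpow hρP.1 (1/2)) * (mpow hρP.1 (1/2) * P)
            = P * ((mpow hρP.1 (1/2) * mpow hρP.1 (1/2)) * P) by simp only [Matrix.mul_assoc],
          hRR]
      rw [h', Matrix.trace_mul_comm P (ρ * P), Matrix.mul_assoc, hPid,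
        Matrix.trace_mul_comm ρ P, ha]
    have hYY : ((P * mpow hσP.1 (1/2))ᴴ * (P * mpow hσP.1 (1/2))).trace.re = b := by
      rw [Matrix.conjTranspose_mul, hSH, hPH]
      have h' : (mpow hσP.1 (1/2) * P) * (P * mpow hσP.1 (1/2))
          = mpow hσP.1 (1/2) * (P * mpow hσP.1 (1/2)) := by
        rw [show (mpow hσP.1 (1/2) * P) * (P * mpow hσP.1 (1/2))
            = mpow hσP.1 (1/2) * ((P * P) * mpow hσP.1 (1/2)) by simp only [Matrix.mul_assoc],
          hPid]
      rw [h', Matrix.trace_mul_comm, Matrix.mul_assoc, hSS, hb]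
    rw [hXX, hYY]
  have hb2 : traceNorm ((mpow hρP.1 (1/2) * P') * (P' * mpow hσP.1 (1/2)))
      ≤ Real.sqrt (1 - a) * Real.sqrt (1 - b) := by
    refine le_trans (traceNorm_mul_le _ _) ?_
    have hXX : ((mpow hρP.1 (1/2) * P')ᴴ * (mpow hρP.1 (1/2) * P')).trace.re = 1 - a := by
      rw [Matrix.conjTranspose_mul, hRH, hP'H]
      have h' : (P' * mpow hρP.1 (1/2)) * (mpow hρP.1 (1/2) * P') = P' * (ρ * P') := by
        rw [show (P' * mpow hρP.1 (1/2)) * (mpow hρP.1 (1/2) * P')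
            = P' * ((mpow hρP.1 (1/2) * mpow hρP.1 (1/2)) * P') by simp only [Matrix.mul_assoc],
          hRR]
      rw [h', Matrix.trace_mul_comm P' (ρ * P'), Matrix.mul_assoc, hP'id,
        Matrix.trace_mul_comm ρ P', hP'ρ]
    have hYY : ((P' * mpow hσP.1 (1/2))ᴴ * (P' * mpow hσP.1 (1/2))).trace.re = 1 - b := by
      rw [Matrix.conjTranspose_mul, hSH, hP'H]
      have h' : (mpow hσP.1 (1/2) * P') * (P' * mpow hσP.1 (1/2))
          = mpow hσP.1 (1/2) * (P' * mpow hσP.1 (1/2)) := by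
        rw [show (mpow hσP.1 (1/2) * P') * (P' * mpow hσP.1 (1/2))
            = mpow hσP.1 (1/2) * ((P' * P') * mpow hσP.1 (1/2)) by simp only [Matrix.mul_assoc],
          hP'id]
      rw [h', Matrix.trace_mul_comm, Matrix.mul_assoc, hSS, hP'σ]
    rw [hXX, hYY]
  have hFle : fid hρP.1 hσP.1
      ≤ Real.sqrt a * Real.sqrt b + Real.sqrt (1 - a) * Real.sqrt (1 - b) := by
    calc fid hρP.1 hσP.1
        = traceNorm ((mpow hρP.1 (1/2) * P) * (P * mpow hσP.1 (1/2))
            + (mpow hρP.1 (1/2) * P') * (P' * mpow hσP.1 (1/2))) := by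
          rw [fid, hsplit]
      _ ≤ traceNorm ((mpow hρP.1 (1/2) * P) * (P * mpow hσP.1 (1/2)))
            + traceNorm ((mpow hρP.1 (1/2) * P') * (P' * mpow hσP.1 (1/2))) :=
          traceNorm_add_le _ _
      _ ≤ _ := add_le_add hb1 hb2
  -- final scalar work
  have hF0 : 0 ≤ fid hρP.1 hσP.1 := traceNorm_nonneg _
  have hG0 : 0 ≤ Real.sqrt a * Real.sqrt b + Real.sqrt (1 - a) * Real.sqrt (1 - b) := by
    positivity
  have hF2 : (fid hρP.1 hσP.1) ^ 2
      ≤ (Real.sqrt a * Real.sqrt b + Real.sqrt (1 - a) * Real.sqrt (1 - b)) ^ 2 :=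
    pow_le_pow_left₀ hF0 hFle 2
  rw [hEab]
  nlinarith [hF2, Real.sq_sqrt haB.1, Real.sq_sqrt hbB.1,
    Real.sq_sqrt (by linarith [haB.2] : (0:ℝ) ≤ 1 - a),
    Real.sq_sqrt (by linarith [hbB.2] : (0:ℝ) ≤ 1 - b),
    Real.sqrt_nonneg a, Real.sqrt_nonneg b, Real.sqrt_nonneg (1 - a), Real.sqrt_nonneg (1 - b),
    sq_nonneg (Real.sqrt a * Real.sqrt (1 - a) - Real.sqrt b * Real.sqrt (1 - b))]

end main

/-- For `α ∈ [1/2,1]`, the Petz–Hellinger divergence satisfies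
`H̄_α(ρ‖σ) = (1/(1-α))(1 - Tr[ρ^α σ^{1-α}]) ≥ (1 - F(ρ,σ)^{2(1-α)})/(1-α)
≥ (1 - (1 - E₁(ρ‖σ)²)^{1-α})/(1-α)`. -/
theorem stmt_13 {n : Type*} [Fintype n] [DecidableEq n] (ρ σ : Matrix n n ℂ)
    (hρ : IsDensity ρ) (hσ : IsDensity σ)
    (α : ℝ) (hα : α ∈ Set.Icc (1/2 : ℝ) 1) :
    (1 / (1 - α)) * (1 - (mpow hρ.1.1 α * mpow hσ.1.1 (1 - α)).trace.re) ≥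
        (1 - fid hρ.1.1 hσ.1.1 ^ (2 * (1 - α))) / (1 - α) ∧
      (1 - fid hρ.1.1 hσ.1.1 ^ (2 * (1 - α))) / (1 - α) ≥
        (1 - (1 - Egamma 1 ρ σ ^ 2) ^ (1 - α)) / (1 - α) := by
  obtain ⟨hα1, hα2⟩ := hα
  have hmain1 := trace_mpow_le_fid_rpow hρ.1 hσ.1 hρ.2 hα1 hα2
  have hFE := fvdg hρ.1 hσ.1 hρ.2 hσ.2
  have hF0 : 0 ≤ fid hρ.1.1 hσ.1.1 := traceNorm_nonneg _
  have hmain2 : fid hρ.1.1 hσ.1.1 ^ (2*(1-α)) ≤ (1 - Egamma 1 ρ σ ^ 2) ^ (1-α) := by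
    have h2a : fid hρ.1.1 hσ.1.1 ^ (2*(1-α)) = (fid hρ.1.1 hσ.1.1 ^ 2 : ℝ) ^ (1-α : ℝ) := by
      rw [show (2:ℝ)*(1-α) = ((2:ℕ):ℝ)*(1-α) by norm_num, Real.rpow_mul hF0,
        Real.rpow_natCast]
    rw [h2a]
    exact Real.rpow_le_rpow (sq_nonneg _) hFE (by linarith)
  set T : ℝ := (mpow hρ.1.1 α * mpow hσ.1.1 (1 - α)).trace.re with hT
  set Fv : ℝ := fid hρ.1.1 hσ.1.1 with hFv
  set E : ℝ := Egamma 1 ρ σ with hE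
  rcases eq_or_lt_of_le hα2 with heq | hlt
  · subst heq
    constructor
    · rw [show (1:ℝ) - 1 = 0 by ring, div_zero, zero_mul, div_zero]
    · rw [show (1:ℝ) - 1 = 0 by ring, div_zero, div_zero]
  · have hpos : 0 < 1 - α := by linarith
    constructor
    · rw [ge_iff_le, show (1:ℝ)/(1-α) * (1 - T) = (1 - T)/(1-α) by ring,
        div_eq_mul_inv, div_eq_mul_inv]
      exact mul_le_mul_of_nonneg_right (by linarith [hmain1]) (inv_nonneg.mpr hpos.le)
    · rw [ge_iff_le, div_eq_mul_inv, div_eq_mul_inv]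
      exact mul_le_mul_of_nonneg_right (by linarith [hmain2]) (inv_nonneg.mpr hpos.le)
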